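/- arXiv:1312.2367 — 5 statements merged into one kernel-verified Lean document; each statement's English description precedes it below -/
import Mathlib

section
/- For the complete 2-dimensional simplicial complex X on n vertices, the 0-th coboundary expansion constant satisfies ε_0(X) ≥ n/(n-1) ≥ 1. -/
variable {V : Type*} [Fintype V] [DecidableEq V]

/-- `‖δ₀ f‖` in the complete complex on `V`: the fraction (among all `C(n,2)` edges, i.e.
2-element subsets of `V`) of edges `{u,v}` with `f(u) + f(v) ≠ 0`. -/
noncomputable def nrmDelta0 (f : V → ZMod 2) : ℝ :=
  (((Finset.univ : Finset (Finset V)).filter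
      (fun s => s.card = 2 ∧ (∑ v ∈ s, f v) ≠ 0)).card : ℝ)
    / ((Fintype.card V).choose 2 : ℝ)

/-- The normalized Hamming distance from `f ∈ C^0` to `B^0 = {0, 𝟙}`. -/
noncomputable def distBar0 (f : V → ZMod 2) : ℝ :=
  sInf {x : ℝ | ∃ h ∈ ({0, fun _ => 1} : Set (V → ZMod 2)),
    x = ((Finset.univ.filter (fun v => f v ≠ h v)).card : ℝ) / (Fintype.card V : ℝ)}

/-- `ε₀` of the complete 2-dimensional complex `K_n^{(2)}` on the vertex set `V`. -/
noncomputable def eps0Complete (V : Type*) [Fintype V] [DecidableEq V] : ℝ :=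
  sInf {x : ℝ | ∃ f : V → ZMod 2, f ≠ 0 ∧ f ≠ (fun _ => 1) ∧
    x = nrmDelta0 f / distBar0 f}

open Finset

lemma edge_count (f : V → ZMod 2) :
    ((Finset.univ : Finset (Finset V)).filter
      (fun s => s.card = 2 ∧ (∑ v ∈ s, f v) ≠ 0)).card
      = (univ.filter (fun v => f v ≠ 0)).card * (univ.filter (fun v => f v = 0)).card := by
  classical
  set S := univ.filter (fun v : V => f v ≠ 0) with hS
  set T := univ.filter (fun v : V => f v = 0) with hT
  have hmemS : ∀ v, v ∈ S ↔ f v ≠ 0 := by intro v; simp [hS]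
  have hmemT : ∀ v, v ∈ T ↔ f v = 0 := by intro v; simp [hT]
  have himg : (Finset.univ : Finset (Finset V)).filter
      (fun s => s.card = 2 ∧ (∑ v ∈ s, f v) ≠ 0)
      = (S ×ˢ T).image (fun p => ({p.1, p.2} : Finset V)) := by
    ext s
    simp only [mem_filter, mem_univ, true_and, mem_image, Finset.mem_product]
    constructor
    · rintro ⟨hcard, hsum⟩
      obtain ⟨u, v, huv, rfl⟩ := Finset.card_eq_two.mp hcard
      rw [Finset.sum_pair huv] at hsum
      have hne : f u ≠ f v := by
        intro h
        apply hsum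
        rw [h]
        have : ∀ a : ZMod 2, a + a = 0 := by decide
        exact this _
      by_cases hu : f u = 0
      · refine ⟨(v, u), ⟨(hmemS v).mpr ?_, (hmemT u).mpr hu⟩, ?_⟩
        · intro hv; exact hne (hu.trans hv.symm)
        · simp [Finset.pair_comm]
      · refine ⟨(u, v), ⟨(hmemS u).mpr hu, (hmemT v).mpr ?_⟩, rfl⟩
        have : ∀ a : ZMod 2, a ≠ 0 → a = 1 := by decide
        have hu1 := this _ hu
        have : ∀ a : ZMod 2, a ≠ 1 → a = 0 := by decide
        exact this _ (fun h => hne (hu1.trans h.symm))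
    · rintro ⟨⟨u, v⟩, ⟨hu, hv⟩, rfl⟩
      rw [hmemS] at hu; rw [hmemT] at hv
      have huv : u ≠ v := fun h => hu (h ▸ hv)
      refine ⟨Finset.card_pair huv, ?_⟩
      rw [Finset.sum_pair huv, hv, add_zero]
      exact hu
  rw [himg, Finset.card_image_of_injOn, Finset.card_product]
  rintro ⟨u, v⟩ hp ⟨u', v'⟩ hq heq
  simp only [Finset.coe_product, Set.mem_prod, Finset.mem_coe] at hp hq
  rw [hmemS] at hp hq; rw [hmemT] at hp hq
  have heq' : ({u, v} : Finset V) = {u', v'} := heq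
  have h1 : u ∈ ({u', v'} : Finset V) := by rw [← heq']; simp
  have h2 : v ∈ ({u', v'} : Finset V) := by rw [← heq']; simp
  simp only [Finset.mem_insert, Finset.mem_singleton] at h1 h2
  have hu : u = u' := h1.resolve_right (fun h => absurd (by rw [h]; exact hq.2) hp.1)
  have hv : v = v' := h2.resolve_left (fun h => absurd (by rw [← h]; exact hp.2) hq.1)
  simp [hu, hv]

lemma distBar0_eq (f : V → ZMod 2) :
    distBar0 f = min (((univ.filter (fun v => f v ≠ 0)).card : ℝ) / (Fintype.card V : ℝ))
      (((univ.filter (fun v => f v = 0)).card : ℝ) / (Fintype.card V : ℝ)) := by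
  have hfilter : univ.filter (fun v : V => f v ≠ (1 : ZMod 2))
      = univ.filter (fun v => f v = 0) := by
    apply Finset.filter_congr
    intro v _
    constructor
    · intro h; revert h; generalize f v = a; revert a; decide
    · intro h; rw [h]; decide
  have hset : {x : ℝ | ∃ h ∈ ({0, fun _ => 1} : Set (V → ZMod 2)),
      x = ((Finset.univ.filter (fun v => f v ≠ h v)).card : ℝ) / (Fintype.card V : ℝ)}
      = {((univ.filter (fun v => f v ≠ 0)).card : ℝ) / (Fintype.card V : ℝ),
         ((univ.filter (fun v => f v = 0)).card : ℝ) / (Fintype.card V : ℝ)} := by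
    ext x
    simp only [Set.mem_setOf_eq, Set.mem_insert_iff, Set.mem_singleton_iff]
    constructor
    · rintro ⟨h, hh, rfl⟩
      rcases hh with rfl | rfl
      · left; rfl
      · right; rw [hfilter]
    · rintro (rfl | rfl)
      · exact ⟨0, Or.inl rfl, rfl⟩
      · exact ⟨fun _ => 1, Or.inr rfl, by rw [hfilter]⟩
  rw [distBar0, hset, csInf_pair]

lemma aux_ineq (n a b C : ℝ) (hn : 2 ≤ n) (ha : 1 ≤ a) (hb : 1 ≤ b) (hab : a + b = n)
    (h : a ≤ b) (hC : C = n * (n - 1) / 2) : (n : ℝ) / (n - 1) ≤ (a * b / C) / (a / n) := by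
  have hC0 : 0 < C := by rw [hC]; nlinarith
  have ha0 : 0 < a := by linarith
  have hn0 : 0 < n := by linarith
  have key : (a * b / C) / (a / n) = n * b / C := by
    field_simp
  rw [key, hC, div_le_div_iff₀ (by linarith) (by nlinarith)]
  nlinarith

/-- For the complete 2-dimensional simplicial complex `X = K_n^{(2)}` on `n`
vertices (`n ≥ 2`), the `0`-th coboundary expansion constant satisfies
`ε₀(X) ≥ n/(n-1) ≥ 1`. -/
theorem eps0_complete_ge (n : ℕ) (hn : 2 ≤ n) (hV : Fintype.card V = n) :
    eps0Complete V ≥ (n : ℝ) / ((n : ℝ) - 1) ∧ (n : ℝ) / ((n : ℝ) - 1) ≥ 1 := by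
  have hn1 : (1 : ℝ) ≤ (n : ℝ) - 1 := by
    have : (2 : ℝ) ≤ (n : ℝ) := by exact_mod_cast hn
    linarith
  have hn0 : (0 : ℝ) < (n : ℝ) := by positivity
  constructor
  · -- nonempty: an indicator function
    have hcard1 : 1 < Fintype.card V := by omega
    obtain ⟨v₀, v₁, hv01⟩ := Fintype.exists_pair_of_one_lt_card hcard1
    set f₀ : V → ZMod 2 := fun v => if v = v₀ then 1 else 0 with hf₀
    have hne : (Set.Nonempty {x : ℝ | ∃ f : V → ZMod 2, f ≠ 0 ∧ f ≠ (fun _ => 1) ∧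
        x = nrmDelta0 f / distBar0 f}) := by
      refine ⟨nrmDelta0 f₀ / distBar0 f₀, f₀, ?_, ?_, rfl⟩
      · intro h
        have := congrFun h v₀
        simp [hf₀] at this
      · intro h
        have := congrFun h v₁
        simp [hf₀] at this
        exact hv01 this.symm
    apply le_csInf hne
    rintro x ⟨f, hf0, hf1, rfl⟩
    -- counts
    set k := (univ.filter (fun v : V => f v ≠ 0)).card with hk
    set j := (univ.filter (fun v : V => f v = 0)).card with hj
    have hkj : k + j = n := by
      rw [hk, hj, ← hV, ← Finset.card_univ]
      have heq2 : univ.filter (fun v : V => f v = 0) = univ.filter (fun v : V => ¬ f v ≠ 0) := by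
        apply Finset.filter_congr; intro v _; simp
      rw [heq2]
      exact Finset.card_filter_add_card_filter_not (p := fun v => f v ≠ 0)
    have hk1 : 1 ≤ k := by
      rcases Function.ne_iff.mp hf0 with ⟨v, hv⟩
      apply Finset.card_pos.mpr ⟨v, Finset.mem_filter.mpr ⟨Finset.mem_univ v, hv⟩⟩
    have hj1 : 1 ≤ j := by
      rcases Function.ne_iff.mp hf1 with ⟨v, hv⟩
      have : f v = 0 := by revert hv; generalize f v = a; revert a; decide
      apply Finset.card_pos.mpr ⟨v, Finset.mem_filter.mpr ⟨Finset.mem_univ v, this⟩⟩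
    have hkr : (1 : ℝ) ≤ (k : ℝ) := by exact_mod_cast hk1
    have hjr : (1 : ℝ) ≤ (j : ℝ) := by exact_mod_cast hj1
    have hkjr : (k : ℝ) + (j : ℝ) = (n : ℝ) := by exact_mod_cast hkj
    have hCval : ((Fintype.card V).choose 2 : ℝ) = (n : ℝ) * ((n : ℝ) - 1) / 2 := by
      rw [hV, Nat.cast_choose_two]
    have hnrm : nrmDelta0 f = ((k : ℝ) * (j : ℝ)) / ((n : ℝ) * ((n : ℝ) - 1) / 2) := by
      rw [nrmDelta0, edge_count, hCval]
      push_cast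
      rfl
    have hdist : distBar0 f = min ((k : ℝ) / (n : ℝ)) ((j : ℝ) / (n : ℝ)) := by
      rw [distBar0_eq, hV]
    rw [hnrm, hdist]
    rcases le_total ((k : ℝ) / (n : ℝ)) ((j : ℝ) / (n : ℝ)) with h | h
    · rw [min_eq_left h]
      have hkj' : (k : ℝ) ≤ (j : ℝ) := by
        rwa [div_le_div_iff_of_pos_right hn0] at h
      exact aux_ineq (n : ℝ) (k : ℝ) (j : ℝ) _ (by exact_mod_cast hn) hkr hjr hkjr hkj' rfl
    · rw [min_eq_right h]
      have hkj' : (j : ℝ) ≤ (k : ℝ) := by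
        rwa [div_le_div_iff_of_pos_right hn0] at h
      have := aux_ineq (n : ℝ) (j : ℝ) (k : ℝ) _ (by exact_mod_cast hn) hjr hkr
        (by linarith) hkj' rfl
      calc (n : ℝ) / ((n : ℝ) - 1) ≤ ((j : ℝ) * (k : ℝ) / ((n:ℝ) * ((n:ℝ)-1)/2)) / ((j:ℝ)/(n:ℝ)) := this
        _ = ((k : ℝ) * (j : ℝ) / ((n:ℝ) * ((n:ℝ)-1)/2)) / ((j:ℝ)/(n:ℝ)) := by ring_nf
  · rw [ge_iff_le, le_div_iff₀ (by linarith)]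
    linarith
end

section
/- For the complete 2-dimensional simplicial complex X on n vertices and any α ∈ C^1(X,F_2), 3·|δ_1 α| = Σ_{u ∈ [n]} |α - δ_0 α_u| ≥ n · dist(α, B^1), where α_u is the local view of α from u. Consequently ε_1(X) ≥ n/(n-2) ≥ 1. -/
variable {V : Type*} [Fintype V] [DecidableEq V]

/-- `|δ₁ α|`: the number of triangles (3-element subsets of `V`) on which
`(δ₁ α)({u,v,w}) = α({u,v}) + α({v,w}) + α({u,w})` is nonzero. -/
def wtTri (α : Finset V → ZMod 2) : ℕ :=
  ((Finset.univ : Finset (Finset V)).filter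
    (fun s => s.card = 3 ∧ (∑ v ∈ s, α (s.erase v)) ≠ 0)).card

/-- The number of edges (2-element subsets of `V`) on which a `1`-cochain is nonzero. -/
def wtEdge (β : Finset V → ZMod 2) : ℕ :=
  ((Finset.univ : Finset (Finset V)).filter (fun s => s.card = 2 ∧ β s ≠ 0)).card

/-- The local view of `α` from `u`: `α_u(v) = α({u,v})` for `v ≠ u`, and `α_u(u) = 0`. -/
def localView (α : Finset V → ZMod 2) (u : V) : V → ZMod 2 :=
  fun v => if v = u then 0 else α {u, v}

/-- `dist(α, B¹)`: the minimal Hamming weight (number of edges) of `α - δ₀ g` over all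
`g ∈ C⁰`, i.e. the distance from `α` to the coboundaries `B¹ = Im δ₀`. -/
noncomputable def dist1 (α : Finset V → ZMod 2) : ℕ :=
  sInf {k : ℕ | ∃ g : V → ZMod 2, k = wtEdge (fun s => α s - ∑ v ∈ s, g v)}

/-- `ε₁` of the complete 2-dimensional complex on `V`. -/
noncomputable def eps1Complete (V : Type*) [Fintype V] [DecidableEq V] : ℝ :=
  sInf {x : ℝ | ∃ α : Finset V → ZMod 2,
    ¬ (∃ g : V → ZMod 2, ∀ s : Finset V, s.card = 2 → α s = ∑ v ∈ s, g v) ∧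
    x = ((wtTri α : ℝ) / ((Fintype.card V).choose 3 : ℝ))
        / ((dist1 α : ℝ) / ((Fintype.card V).choose 2 : ℝ))}

set_option linter.unusedSectionVars false in
lemma lv_self (α : Finset V → ZMod 2) (u : V) : localView α u u = 0 := by
  simp [localView]

set_option linter.unusedSectionVars false in
lemma lv_ne (α : Finset V → ZMod 2) {u v : V} (h : v ≠ u) : localView α u v = α {u, v} := by
  simp [localView, h]

set_option linter.unusedSectionVars false in
lemma key_sum (α : Finset V → ZMod 2) {u x y : V} (hxy : x ≠ y) (hux : u ≠ x) (huy : u ≠ y) :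
    (∑ v ∈ ({u, x, y} : Finset V), α (({u, x, y} : Finset V).erase v)) =
    α {x, y} - ∑ v ∈ ({x, y} : Finset V), localView α u v := by
  have hu : u ∉ ({x, y} : Finset V) := by simp [hux, huy]
  have e2 : ({u, x, y} : Finset V).erase x = {u, y} := by
    ext z; simp only [Finset.mem_erase, Finset.mem_insert, Finset.mem_singleton]
    constructor
    · rintro ⟨hz, h | h | h⟩ <;> tauto
    · rintro (h | h) <;> subst h <;> exact ⟨by tauto, by tauto⟩
  have e3 : ({u, x, y} : Finset V).erase y = {u, x} := by
    ext z; simp only [Finset.mem_erase, Finset.mem_insert, Finset.mem_singleton]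
    constructor
    · rintro ⟨hz, h | h | h⟩ <;> tauto
    · rintro (h | h) <;> subst h <;> exact ⟨by tauto, by tauto⟩
  rw [show ({u, x, y} : Finset V) = insert u {x, y} from rfl, Finset.sum_insert hu,
    Finset.sum_pair hxy, Finset.sum_pair hxy, Finset.erase_insert hu]
  rw [show (insert u {x, y} : Finset V).erase x = {u, y} from e2,
    show (insert u {x, y} : Finset V).erase y = {u, x} from e3]
  rw [lv_ne α hux.symm, lv_ne α huy.symm, CharTwo.sub_eq_add]
  ring

set_option linter.unusedSectionVars false in
lemma zero_on_incident (α : Finset V → ZMod 2) {u : V} {s : Finset V} (hs : s.card = 2)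
    (hu : u ∈ s) : α s - ∑ v ∈ s, localView α u v = 0 := by
  obtain ⟨x, y, hxy, rfl⟩ := Finset.card_eq_two.mp hs
  rw [Finset.sum_pair hxy]
  rcases Finset.mem_insert.mp hu with rfl | hu
  · rw [lv_self, lv_ne α hxy.symm]; simp
  · rw [Finset.mem_singleton] at hu; subst hu
    rw [lv_self, lv_ne α hxy, Finset.pair_comm x u]; simp

lemma wtEdge_eq_local (α : Finset V → ZMod 2) (u : V) :
    wtEdge (fun s => α s - ∑ v ∈ s, localView α u v) =
    (((Finset.univ : Finset (Finset V)).filter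
      (fun t => t.card = 3 ∧ (∑ v ∈ t, α (t.erase v)) ≠ 0)).filter (fun t => u ∈ t)).card := by
  unfold wtEdge
  refine Finset.card_bij (fun s _ => insert u s) ?_ ?_ ?_
  · intro s hs
    simp only [Finset.mem_filter, Finset.mem_univ, true_and] at hs ⊢
    obtain ⟨hcard, hne⟩ := hs
    have hu : u ∉ s := fun h => hne (zero_on_incident α hcard h)
    obtain ⟨x, y, hxy, rfl⟩ := Finset.card_eq_two.mp hcard
    have hux : u ≠ x := fun h => hu (by simp [h])
    have huy : u ≠ y := fun h => hu (by simp [h])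
    refine ⟨⟨?_, ?_⟩, by simp⟩
    · rw [Finset.card_insert_of_notMem hu, hcard]
    · rw [show insert u ({x, y} : Finset V) = {u, x, y} from rfl, key_sum α hxy hux huy]
      exact hne
  · intro s₁ hs₁ s₂ hs₂ h
    simp only [Finset.mem_filter, Finset.mem_univ, true_and] at hs₁ hs₂
    have hu₁ : u ∉ s₁ := fun hh => hs₁.2 (zero_on_incident α hs₁.1 hh)
    have hu₂ : u ∉ s₂ := fun hh => hs₂.2 (zero_on_incident α hs₂.1 hh)
    rw [← Finset.erase_insert hu₁, ← Finset.erase_insert hu₂]; exact congrArg (·.erase u) h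
  · intro t ht
    simp only [Finset.mem_filter, Finset.mem_univ, true_and] at ht
    obtain ⟨⟨hc3, hne⟩, hut⟩ := ht
    refine ⟨t.erase u, ?_, Finset.insert_erase hut⟩
    simp only [Finset.mem_filter, Finset.mem_univ, true_and]
    have hcard : (t.erase u).card = 2 := by rw [Finset.card_erase_of_mem hut, hc3]
    refine ⟨hcard, ?_⟩
    obtain ⟨x, y, hxy, hxyeq⟩ := Finset.card_eq_two.mp hcard
    have hux : u ≠ x := fun h => by
      have : x ∈ t.erase u := by rw [hxyeq]; simp
      exact (Finset.mem_erase.mp this).1 h.symm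
    have huy : u ≠ y := fun h => by
      have : y ∈ t.erase u := by rw [hxyeq]; simp
      exact (Finset.mem_erase.mp this).1 h.symm
    have ht' : t = ({u, x, y} : Finset V) := by
      rw [← Finset.insert_erase hut, hxyeq]
    rw [hxyeq, ← key_sum α hxy hux huy, ← ht']
    exact hne

lemma triple_count (S : Finset (Finset V)) (h3 : ∀ t ∈ S, t.card = 3) :
    3 * S.card = ∑ u : V, (S.filter (fun t => u ∈ t)).card := by
  have h1 : ∀ u : V, (S.filter (fun t => u ∈ t)).card = ∑ t ∈ S, if u ∈ t then 1 else 0 :=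
    fun u => Finset.card_filter _ _
  simp_rw [h1]
  rw [Finset.sum_comm]
  have h2 : ∀ t ∈ S, (∑ u : V, if u ∈ t then 1 else 0) = 3 := by
    intro t ht
    rw [← Finset.card_filter, Finset.filter_mem_eq_inter, Finset.univ_inter, h3 t ht]
  rw [Finset.sum_congr rfl h2, Finset.sum_const, smul_eq_mul, mul_comm]

/-- Part 1: the double counting identity. -/
lemma part1 (α : Finset V → ZMod 2) :
    3 * wtTri α = ∑ u : V, wtEdge (fun s => α s - ∑ v ∈ s, localView α u v) := by
  have := triple_count ((Finset.univ : Finset (Finset V)).filter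
      (fun t => t.card = 3 ∧ (∑ v ∈ t, α (t.erase v)) ≠ 0))
      (fun t ht => (Finset.mem_filter.mp ht).2.1)
  rw [wtTri, this]
  exact Finset.sum_congr rfl fun u _ => (wtEdge_eq_local α u).symm

/-- Part 2. -/
lemma part2 (n : ℕ) (hV : Fintype.card V = n) (α : Finset V → ZMod 2) :
    (∑ u : V, wtEdge (fun s => α s - ∑ v ∈ s, localView α u v)) ≥ n * dist1 α := by
  have hle : ∀ u : V, dist1 α ≤ wtEdge (fun s => α s - ∑ v ∈ s, localView α u v) := by
    intro u
    exact Nat.sInf_le ⟨localView α u, rfl⟩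
  calc n * dist1 α = ∑ _u : V, dist1 α := by
        rw [Finset.sum_const, smul_eq_mul, Finset.card_univ, hV]
    _ ≤ ∑ u : V, wtEdge (fun s => α s - ∑ v ∈ s, localView α u v) :=
        Finset.sum_le_sum fun u _ => hle u

lemma dist1_pos (α : Finset V → ZMod 2)
    (hα : ¬ (∃ g : V → ZMod 2, ∀ s : Finset V, s.card = 2 → α s = ∑ v ∈ s, g v)) :
    1 ≤ dist1 α := by
  rw [Nat.one_le_iff_ne_zero]
  intro h0
  have hne : {k : ℕ | ∃ g : V → ZMod 2, k = wtEdge (fun s => α s - ∑ v ∈ s, g v)}.Nonempty :=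
    ⟨_, fun _ => 0, rfl⟩
  have := (Nat.sInf_eq_zero.mp h0).resolve_right (Set.nonempty_iff_ne_empty.mp hne)
  obtain ⟨g, hg⟩ := this
  refine hα ⟨g, fun s hs => ?_⟩
  have : ((Finset.univ : Finset (Finset V)).filter
      (fun s => s.card = 2 ∧ (α s - ∑ v ∈ s, g v) ≠ 0)) = ∅ :=
    Finset.card_eq_zero.mp hg.symm
  by_contra hne'
  have hmem : s ∈ (Finset.univ : Finset (Finset V)).filter
      (fun s => s.card = 2 ∧ (α s - ∑ v ∈ s, g v) ≠ 0) := by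
    simp only [Finset.mem_filter, Finset.mem_univ, true_and]
    exact ⟨hs, fun h => hne' (by rwa [sub_eq_zero] at h)⟩
  rw [this] at hmem
  exact absurd hmem (Finset.notMem_empty s)

lemma choose_id (n : ℕ) : n.choose 3 * 3 = n.choose 2 * (n - 2) :=
  Nat.choose_succ_right_eq n 2

set_option linter.unusedSectionVars false in
lemma set_nonempty (hn3 : 3 ≤ Fintype.card V) :
    {x : ℝ | ∃ α : Finset V → ZMod 2,
      ¬ (∃ g : V → ZMod 2, ∀ s : Finset V, s.card = 2 → α s = ∑ v ∈ s, g v) ∧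
      x = ((wtTri α : ℝ) / ((Fintype.card V).choose 3 : ℝ))
          / ((dist1 α : ℝ) / ((Fintype.card V).choose 2 : ℝ))}.Nonempty := by
  obtain ⟨t, _, ht⟩ := Finset.exists_subset_card_eq (s := (Finset.univ : Finset V)) (n := 3)
    (by rwa [Finset.card_univ])
  obtain ⟨a, b, c, hab, hac, hbc, rfl⟩ := Finset.card_eq_three.mp ht
  set α₀ : Finset V → ZMod 2 := fun s => if s = {a, b} then 1 else 0 with hα₀
  refine ⟨_, α₀, ?_, rfl⟩
  rintro ⟨g, hg⟩
  have h1 : (1 : ZMod 2) = g a + g b := by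
    have := hg {a, b} (Finset.card_pair hab)
    rw [Finset.sum_pair hab] at this
    simpa [hα₀] using this
  have hacb : ({a, c} : Finset V) ≠ {a, b} := by
    intro h
    have : b ∈ ({a, c} : Finset V) := h ▸ by simp
    simp only [Finset.mem_insert, Finset.mem_singleton] at this
    rcases this with h' | h' <;> [exact hab h'.symm; exact hbc h']
  have hbcb : ({b, c} : Finset V) ≠ {a, b} := by
    intro h
    have : a ∈ ({b, c} : Finset V) := h ▸ by simp
    simp only [Finset.mem_insert, Finset.mem_singleton] at this
    rcases this with h' | h' <;> [exact hab h'; exact hac h']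
  have h2 : (0 : ZMod 2) = g a + g c := by
    have := hg {a, c} (Finset.card_pair hac)
    rw [Finset.sum_pair hac] at this
    simpa [hα₀, hacb] using this
  have h3 : (0 : ZMod 2) = g b + g c := by
    have := hg {b, c} (Finset.card_pair hbc)
    rw [Finset.sum_pair hbc] at this
    simpa [hα₀, hbcb] using this
  have hd : ∀ x : ZMod 2, x = 0 ∨ x = 1 := by decide
  rcases hd (g a) with ha' | ha' <;> rcases hd (g b) with hb' | hb' <;>
    rcases hd (g c) with hc' | hc' <;>
    rw [ha', hb'] at h1 <;> rw [ha', hc'] at h2 <;> rw [hb', hc'] at h3 <;>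
    revert h1 h2 h3 <;> decide

/-- For the complete 2-dimensional complex `X` on `n ≥ 3` vertices and any
`α ∈ C¹(X,F₂)`: `3·|δ₁ α| = ∑_{u ∈ [n]} |α - δ₀ α_u| ≥ n · dist(α, B¹)`, where `α_u` is the
local view of `α` from `u`.  Consequently `ε₁(X) ≥ n/(n-2) ≥ 1`. -/
theorem complete_complex_eps1 (n : ℕ) (hn : 3 ≤ n) (hV : Fintype.card V = n)
    (α : Finset V → ZMod 2) :
    3 * wtTri α = ∑ u : V, wtEdge (fun s => α s - ∑ v ∈ s, localView α u v) ∧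
    (∑ u : V, wtEdge (fun s => α s - ∑ v ∈ s, localView α u v)) ≥ n * dist1 α ∧
    eps1Complete V ≥ (n : ℝ) / ((n : ℝ) - 2) ∧ (n : ℝ) / ((n : ℝ) - 2) ≥ 1 := by
  have hn2 : (0 : ℝ) < (n : ℝ) - 2 := by
    have : (3 : ℝ) ≤ (n : ℝ) := by exact_mod_cast hn
    linarith
  refine ⟨part1 α, part2 n hV α, ?_, ?_⟩
  · -- eps1 bound
    rw [eps1Complete]
    refine le_csInf (by rw [← hV] at hn; exact set_nonempty hn) ?_
    rintro x ⟨β, hβ, rfl⟩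
    rw [hV]
    set T := wtTri β with hT
    set D := dist1 β with hD
    have hmain : n * D ≤ 3 * T := (part1 β).symm ▸ part2 n hV β
    have hD1 : 1 ≤ D := dist1_pos β hβ
    have hA : 0 < n.choose 3 := Nat.choose_pos hn
    have hB : 0 < n.choose 2 := Nat.choose_pos (by omega)
    have hnat : n * (n.choose 3 * D) ≤ T * (n.choose 2 * (n - 2)) := by
      calc n * (n.choose 3 * D) = (n * D) * n.choose 3 := by ring
        _ ≤ (3 * T) * n.choose 3 := Nat.mul_le_mul_right _ hmain
        _ = T * (n.choose 3 * 3) := by ring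
        _ = T * (n.choose 2 * (n - 2)) := by rw [choose_id]
    have hreal : (n : ℝ) * ((n.choose 3 : ℝ) * D) ≤ (T : ℝ) * ((n.choose 2 : ℝ) * ((n : ℝ) - 2)) := by
      have := (Nat.cast_le (α := ℝ)).mpr hnat
      push_cast [Nat.cast_sub (by omega : 2 ≤ n)] at this
      convert this using 2 <;> push_cast <;> ring
    have hDpos : (0 : ℝ) < (D : ℝ) := by exact_mod_cast hD1
    have hApos : (0 : ℝ) < (n.choose 3 : ℝ) := by exact_mod_cast hA
    have hBpos : (0 : ℝ) < (n.choose 2 : ℝ) := by exact_mod_cast hB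
    have hform : ((T : ℝ) / (n.choose 3 : ℝ)) / ((D : ℝ) / (n.choose 2 : ℝ))
        = ((T : ℝ) * (n.choose 2 : ℝ)) / ((n.choose 3 : ℝ) * (D : ℝ)) := by
      field_simp
    rw [hform, div_le_div_iff₀ hn2 (by positivity)]
    nlinarith [hreal]
  · rw [ge_iff_le, le_div_iff₀ hn2]
    linarith [hn2]
end

section
/- Triangle test soundness for K_n: for any function f on the edges of K_n, the fraction of triangles {i,j,k} with f({i,j})+f({j,k})+f({k,i}) ≠ 0 is at least the normalized Hamming distance from f to the space of sum functions (normalized by C(n,2)). -/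
variable {V : Type*} [Fintype V] [DecidableEq V]

/-- The number of violated triangles: 3-element subsets `{i,j,k}` of `V` with
`(δ₁ f)({i,j,k}) = f({i,j}) + f({j,k}) + f({k,i}) ≠ 0`. -/
def violatedTriangles (f : Finset V → ZMod 2) : ℕ :=
  ((Finset.univ : Finset (Finset V)).filter
    (fun s => s.card = 3 ∧ (∑ v ∈ s, f (s.erase v)) ≠ 0)).card

/-- The Hamming distance from `f` to the space `B¹` of sum functions
(`h({i,j}) = g(i)+g(j)` for some `g`), counted on the `C(n,2)` edges of `K_n`. -/
noncomputable def distToSum (f : Finset V → ZMod 2) : ℕ :=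
  sInf {k : ℕ | ∃ g : V → ZMod 2,
    k = ((Finset.univ : Finset (Finset V)).filter
          (fun s => s.card = 2 ∧ f s ≠ ∑ v ∈ s, g v)).card}

lemma lemA (f : Finset V → ZMod 2) (u : V) :
    sInf {k : ℕ | ∃ g : V → ZMod 2,
      k = ((Finset.univ : Finset (Finset V)).filter
            (fun s => s.card = 2 ∧ f s ≠ ∑ v ∈ s, g v)).card}
    ≤ (((Finset.univ : Finset (Finset V)).filter
        (fun s => s.card = 3 ∧ (∑ v ∈ s, f (s.erase v)) ≠ 0)).filter
        (fun s => u ∈ s)).card := by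
  classical
  set g : V → ZMod 2 := fun v => if v = u then 0 else f {u, v} with hg
  refine le_trans (Nat.sInf_le ⟨g, rfl⟩) ?_
  -- every bad edge avoids u
  have hnm : ∀ s ∈ (Finset.univ : Finset (Finset V)).filter
      (fun s => s.card = 2 ∧ f s ≠ ∑ v ∈ s, g v), u ∉ s := by
    intro s hs hu
    simp only [Finset.mem_filter, Finset.mem_univ, true_and] at hs
    obtain ⟨hcard, hne⟩ := hs
    apply hne
    obtain ⟨a, b, hab, rfl⟩ := Finset.card_eq_two.mp hcard
    rcases Finset.mem_insert.mp hu with rfl | hb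
    · rw [Finset.sum_pair hab]
      simp [g, hab.symm]
    · simp only [Finset.mem_singleton] at hb; subst hb
      rw [Finset.sum_pair hab, Finset.pair_comm]
      simp [g, hab]
  apply Finset.card_le_card_of_injOn (fun s => insert u s)
  · intro s hs
    have hu := hnm s hs
    simp only [Finset.mem_coe, Finset.mem_filter, Finset.mem_univ, true_and] at hs ⊢
    obtain ⟨hcard, hne⟩ := hs
    obtain ⟨a, b, hab, rfl⟩ := Finset.card_eq_two.mp hcard
    have hua : u ≠ a := fun h => hu (by simp [h])
    have hub : u ≠ b := fun h => hu (by simp [h])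
    refine ⟨⟨?_, ?_⟩, by simp⟩
    · rw [Finset.card_insert_of_notMem hu, hcard]
    · have e1 : (insert u ({a, b} : Finset V)).erase u = {a, b} :=
        Finset.erase_insert hu
      have e2 : (insert u ({a, b} : Finset V)).erase a = {u, b} := by
        rw [Finset.erase_insert_of_ne hua,
          Finset.erase_insert (by simp [hab] : a ∉ ({b} : Finset V))]
      have e3 : (insert u ({a, b} : Finset V)).erase b = {u, a} := by
        rw [Finset.erase_insert_of_ne hub, Finset.erase_insert_of_ne hab,
          Finset.erase_singleton]
        simp
      rw [Finset.sum_insert hu, Finset.sum_pair hab, e1, e2, e3]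
      rw [Finset.sum_pair hab] at hne
      have hga : g a = f {u, a} := by simp [g, hua.symm]
      have hgb : g b = f {u, b} := by simp [g, hub.symm]
      rw [hga, hgb] at hne
      revert hne
      generalize f ({a, b} : Finset V) = x
      generalize f ({u, a} : Finset V) = y
      generalize f ({u, b} : Finset V) = z
      revert x y z; decide
  · intro s hs t ht h
    have := congrArg (Finset.erase · u) h
    simpa [Finset.erase_insert (hnm s hs), Finset.erase_insert (hnm t ht)] using this

lemma lemB (f : Finset V → ZMod 2) :
    ∑ u : V, (((Finset.univ : Finset (Finset V)).filter
        (fun s => s.card = 3 ∧ (∑ v ∈ s, f (s.erase v)) ≠ 0)).filter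
        (fun s => u ∈ s)).card
      = 3 * ((Finset.univ : Finset (Finset V)).filter
          (fun s => s.card = 3 ∧ (∑ v ∈ s, f (s.erase v)) ≠ 0)).card := by
  classical
  simp_rw [Finset.card_filter]
  rw [Finset.sum_comm]
  have : ∀ t ∈ (Finset.univ : Finset (Finset V)).filter
      (fun s => s.card = 3 ∧ (∑ v ∈ s, f (s.erase v)) ≠ 0),
      (∑ u : V, if u ∈ t then 1 else 0) = 3 := by
    intro t ht
    simp only [Finset.mem_filter] at ht
    rw [Finset.sum_ite_mem, Finset.univ_inter, Finset.sum_const, smul_eq_mul, mul_one, ht.2.1]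
  rw [Finset.sum_congr rfl this, Finset.sum_const, smul_eq_mul, mul_comm, Finset.card_filter]

/-- **triangle test soundness for `K_n`.** For any function `f` on the edges
of `K_n` (`n ≥ 3`), the fraction of triangles `{i,j,k}` with
`f({i,j}) + f({j,k}) + f({k,i}) ≠ 0` (among all `C(n,3)` triangles) is at least the
normalized Hamming distance (over `C(n,2)` edges) from `f` to the space of sum
functions. -/
theorem triangle_test_soundness (hn : 3 ≤ Fintype.card V) (f : Finset V → ZMod 2) :
    (violatedTriangles f : ℝ) / ((Fintype.card V).choose 3 : ℝ)
      ≥ (distToSum f : ℝ) / ((Fintype.card V).choose 2 : ℝ) := by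
  classical
  set n := Fintype.card V with hnn
  have key : n * distToSum f ≤ 3 * violatedTriangles f := by
    calc n * distToSum f = ∑ _u : V, distToSum f := by
          rw [Finset.sum_const, Finset.card_univ, smul_eq_mul]
      _ ≤ ∑ u : V, (((Finset.univ : Finset (Finset V)).filter
            (fun s => s.card = 3 ∧ (∑ v ∈ s, f (s.erase v)) ≠ 0)).filter
            (fun s => u ∈ s)).card := Finset.sum_le_sum (fun u _ => lemA f u)
      _ = 3 * violatedTriangles f := lemB f
  have hid : 3 * Nat.choose n 3 = n * Nat.choose (n - 1) 2 := by
    obtain ⟨m, hm⟩ : ∃ m, n = m + 1 := ⟨n - 1, by omega⟩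
    have := Nat.add_one_mul_choose_eq m 2
    rw [hm, Nat.add_sub_cancel, this]
    norm_num [mul_comm]
  have hmono : Nat.choose (n - 1) 2 ≤ Nat.choose n 2 :=
    Nat.choose_le_choose 2 (by omega)
  have hmain : distToSum f * Nat.choose n 3 ≤ violatedTriangles f * Nat.choose n 2 := by
    have h1 : n * (distToSum f * Nat.choose n 3)
        ≤ n * (violatedTriangles f * Nat.choose n 2) := by
      calc n * (distToSum f * Nat.choose n 3)
          = (n * distToSum f) * Nat.choose n 3 := by ring
        _ ≤ (3 * violatedTriangles f) * Nat.choose n 3 :=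
            Nat.mul_le_mul_right _ key
        _ = violatedTriangles f * (3 * Nat.choose n 3) := by ring
        _ = violatedTriangles f * (n * Nat.choose (n - 1) 2) := by rw [hid]
        _ ≤ violatedTriangles f * (n * Nat.choose n 2) := by
            exact Nat.mul_le_mul_left _ (Nat.mul_le_mul_left _ hmono)
        _ = n * (violatedTriangles f * Nat.choose n 2) := by ring
    exact Nat.le_of_mul_le_mul_left h1 (by omega)
  have h2 : (0:ℝ) < (Nat.choose n 2 : ℝ) := by
    exact_mod_cast Nat.choose_pos (by omega : 2 ≤ n)
  have h3 : (0:ℝ) < (Nat.choose n 3 : ℝ) := by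
    exact_mod_cast Nat.choose_pos (by omega : 3 ≤ n)
  rw [ge_iff_le, div_le_div_iff₀ h2 h3]
  exact_mod_cast hmain
end

section
/- Tensor power testability: for any n×n symmetric {±1}-matrix M with unit diagonal, the fraction of triples {i,j,k} of distinct indices with M_{ij}M_{jk}M_{ki} ≠ 1 is at least the minimum over vectors α ∈ {±1}^n of the fraction of pairs {i,j}, i≠j, with M_{ij} ≠ α_i α_j. -/
open Finset

/-- The number of unordered triples `{i,j,k}` of distinct indices on which the symmetric
matrix `M` violates the product test `M i j * M j k * M k i = 1`. -/
def badTriples (n : ℕ) (M : Fin n → Fin n → ℤ) : ℕ :=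
  ((univ : Finset (Fin n)).powersetCard 3 |>.filter
    (fun s => ∃ i ∈ s, ∃ j ∈ s, ∃ k ∈ s,
      i ≠ j ∧ j ≠ k ∧ i ≠ k ∧ M i j * M j k * M k i ≠ 1)).card

/-- The number of unordered pairs `{i,j}`, `i ≠ j`, on which `M` differs from the rank-one
sign matrix `(α i * α j)`. -/
def badPairs (n : ℕ) (M : Fin n → Fin n → ℤ) (α : Fin n → ℤ) : ℕ :=
  ((univ : Finset (Fin n)).powersetCard 2 |>.filter
    (fun e => ∃ i ∈ e, ∃ j ∈ e, i ≠ j ∧ M i j ≠ α i * α j)).card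

private lemma sign_cube {a b c : ℤ} (ha : a = 1 ∨ a = -1) (hb : b = 1 ∨ b = -1)
    (hc : c = 1 ∨ c = -1) (h : a ≠ b * c) : a * b * c ≠ 1 := by
  rcases ha with rfl|rfl <;> rcases hb with rfl|rfl <;> rcases hc with rfl|rfl <;> simp_all

/-- **tensor power testability.** For any `n×n` (`n ≥ 3`) symmetric
`{±1}`-matrix `M` with unit diagonal, the fraction (among the `C(n,3)` unordered triples) of
triples `{i,j,k}` of distinct indices with `M i j * M j k * M k i ≠ 1` is at least the
minimum over vectors `α ∈ {±1}ⁿ` of the fraction (among the `C(n,2)` unordered pairs) of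
pairs `{i,j}`, `i ≠ j`, with `M i j ≠ α i * α j`. -/
theorem tensor_power_testability (n : ℕ) (hn : 3 ≤ n) (M : Fin n → Fin n → ℤ)
    (hsymm : ∀ i j, M i j = M j i)
    (hdiag : ∀ i, M i i = 1)
    (hpm : ∀ i j, M i j = 1 ∨ M i j = -1) :
    (badTriples n M : ℝ) / (n.choose 3 : ℝ)
      ≥ sInf {x : ℝ | ∃ α : Fin n → ℤ, (∀ i, α i = 1 ∨ α i = -1) ∧
          x = (badPairs n M α : ℝ) / (n.choose 2 : ℝ)} := by
  -- v is never in a bad pair w.r.t. α^v = (M · v)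
  have hv_not : ∀ v : Fin n, ∀ e : Finset (Fin n), e.card = 2 →
      (∃ i ∈ e, ∃ j ∈ e, i ≠ j ∧ M i j ≠ M i v * M j v) → v ∉ e := by
    rintro v e he ⟨i, hi, j, hj, hij, hbad⟩ hv
    have hsub : ({i, j} : Finset (Fin n)) ⊆ e := by
      intro x hx
      rcases mem_insert.mp hx with rfl | hx
      · exact hi
      · rcases mem_singleton.mp hx with rfl; exact hj
    have hcard : ({i, j} : Finset (Fin n)).card = 2 := by
      rw [card_insert_of_notMem (by simpa using hij), card_singleton]
    have he2 : ({i, j} : Finset (Fin n)) = e :=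
      eq_of_subset_of_card_le hsub (by omega)
    rw [← he2] at hv
    rcases mem_insert.mp hv with rfl | hv
    · exact hbad (by rw [hdiag, one_mul, hsymm])
    · rcases mem_singleton.mp hv with rfl
      exact hbad (by rw [hdiag, mul_one])
  -- sum of badPairs over all base vertices is at most 3 * badTriples
  have hsum : ∑ v : Fin n, badPairs n M (fun i => M i v) ≤ 3 * badTriples n M := by
    have hcS : (((univ : Finset (Fin n)).sigma (fun v =>
        ((univ : Finset (Fin n)).powersetCard 2).filter
          (fun e => ∃ i ∈ e, ∃ j ∈ e, i ≠ j ∧ M i j ≠ M i v * M j v))).card)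
        = ∑ v : Fin n, badPairs n M (fun i => M i v) := by
      rw [Finset.card_sigma]; rfl
    rw [← hcS]
    set S := ((univ : Finset (Fin n)).sigma (fun v =>
        ((univ : Finset (Fin n)).powersetCard 2).filter
          (fun e => ∃ i ∈ e, ∃ j ∈ e, i ≠ j ∧ M i j ≠ M i v * M j v))) with hS
    set T := ((univ : Finset (Fin n)).powersetCard 3).filter
      (fun s => ∃ i ∈ s, ∃ j ∈ s, ∃ k ∈ s,
        i ≠ j ∧ j ≠ k ∧ i ≠ k ∧ M i j * M j k * M k i ≠ 1) with hT
    have hSprop : ∀ p ∈ S, p.2.card = 2 ∧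
        (∃ i ∈ p.2, ∃ j ∈ p.2, i ≠ j ∧ M i j ≠ M i p.1 * M j p.1) := by
      rintro ⟨v, e⟩ hp
      rw [hS, Finset.mem_sigma, Finset.mem_filter, mem_powersetCard] at hp
      exact ⟨hp.2.1.2, hp.2.2⟩
    have hmaps : ∀ p ∈ S, insert p.1 p.2 ∈ T := by
      rintro ⟨v, e⟩ hp
      obtain ⟨hc2, i, hi, j, hj, hij, hbad⟩ := hSprop _ hp
      have hvne : v ∉ e := hv_not v e hc2 ⟨i, hi, j, hj, hij, hbad⟩
      rw [hT, Finset.mem_filter, mem_powersetCard]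
      refine ⟨⟨subset_univ _, by rw [card_insert_of_notMem hvne, hc2]⟩,
        i, mem_insert_of_mem hi, j, mem_insert_of_mem hj, v, mem_insert_self _ _,
        hij, fun h => hvne (h ▸ hj), fun h => hvne (h ▸ hi), ?_⟩
      refine sign_cube (hpm i j) (hpm j v) (hpm v i) ?_
      rw [hsymm v i, mul_comm (M j v)]
      exact hbad
    have hfib : ∀ t ∈ T, (S.filter (fun p => insert p.1 p.2 = t)).card ≤ 3 := by
      intro t ht
      have ht3 : t.card = 3 := by
        rw [hT, Finset.mem_filter, mem_powersetCard] at ht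
        exact ht.1.2
      rw [← ht3]
      apply Finset.card_le_card_of_injOn (fun p => p.1)
      · rintro ⟨v, e⟩ hp
        rw [Finset.mem_coe, Finset.mem_filter] at hp
        exact hp.2 ▸ mem_insert_self v e
      · rintro ⟨v, e⟩ hp ⟨w, f⟩ hq h
        simp only at h
        subst h
        simp only [Finset.mem_coe, Finset.mem_filter] at hp hq
        obtain ⟨hc2p, hQp⟩ := hSprop _ hp.1
        obtain ⟨hc2q, hQq⟩ := hSprop _ hq.1
        have hvp : v ∉ e := hv_not v e hc2p hQp
        have hvq : v ∉ f := hv_not v f hc2q hQq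
        have : e = f := by
          have h1 : (insert v e).erase v = e := erase_insert hvp
          have h2 : (insert v f).erase v = f := erase_insert hvq
          rw [← h1, ← h2, hp.2, hq.2]
        subst this
        rfl
    calc S.card ≤ 3 * T.card := card_le_mul_card_image_of_maps_to hmaps 3 hfib
      _ = 3 * badTriples n M := rfl
  -- pick minimizing vertex
  obtain ⟨v, -, hvmin⟩ := Finset.exists_min_image (univ : Finset (Fin n))
    (fun v => badPairs n M (fun i => M i v)) ⟨⟨0, by omega⟩, mem_univ _⟩
  have hnmin : n * badPairs n M (fun i => M i v) ≤ 3 * badTriples n M := by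
    calc n * badPairs n M (fun i => M i v)
        = ∑ _w : Fin n, badPairs n M (fun i => M i v) := by
          rw [Finset.sum_const, card_univ, Fintype.card_fin, smul_eq_mul]
      _ ≤ ∑ w : Fin n, badPairs n M (fun i => M i w) :=
          Finset.sum_le_sum (fun w _ => hvmin w (mem_univ w))
      _ ≤ 3 * badTriples n M := hsum
  -- nat inequality : badPairs v * C(n,3) ≤ badTriples * C(n,2)
  have hkey : badPairs n M (fun i => M i v) * n.choose 3 ≤ badTriples n M * n.choose 2 := by
    have hid : n.choose 3 * 3 = n.choose 2 * (n - 2) := Nat.choose_succ_right_eq n 2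
    have hsub : n - 2 ≤ n := Nat.sub_le n 2
    set B := badPairs n M (fun i => M i v) with hB
    set T := badTriples n M with hTd
    have h3 : 3 * (B * n.choose 3) ≤ 3 * (T * n.choose 2) := by
      calc 3 * (B * n.choose 3) = B * (n.choose 3 * 3) := by ring
        _ = B * (n.choose 2 * (n - 2)) := by rw [hid]
        _ = (B * (n - 2)) * n.choose 2 := by ring
        _ ≤ (B * n) * n.choose 2 := Nat.mul_le_mul (Nat.mul_le_mul le_rfl hsub) le_rfl
        _ = (n * B) * n.choose 2 := by ring
        _ ≤ (3 * T) * n.choose 2 := Nat.mul_le_mul hnmin le_rfl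
        _ = 3 * (T * n.choose 2) := by ring
    exact Nat.le_of_mul_le_mul_left h3 (by norm_num)
  have hC2 : 0 < n.choose 2 := Nat.choose_pos (by omega)
  have hC3 : 0 < n.choose 3 := Nat.choose_pos hn
  have hx : (badPairs n M (fun i => M i v) : ℝ) / (n.choose 2 : ℝ)
      ≤ (badTriples n M : ℝ) / (n.choose 3 : ℝ) := by
    rw [div_le_div_iff₀ (by exact_mod_cast hC2) (by exact_mod_cast hC3)]
    exact_mod_cast hkey
  refine le_trans (csInf_le ?_ ?_) hx
  · refine ⟨0, ?_⟩
    rintro x ⟨α, hα, rfl⟩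
    positivity
  · exact ⟨fun i => M i v, fun i => hpm i v, rfl⟩
end

section
/- Seidel equivalence testability: for graphs Γ, Γ' on [n] with edge cochains α, α', the fraction of triangles {i,j,k} on which δ_1(α) and δ_1(α') disagree is at least the normalized distance (over C(n,2) edges) of α - α' from B^1(K_n,F_2); in particular, if Γ and Γ' are Seidel equivalent then δ_1 α = δ_1 α', and conversely. -/
variable {V : Type*} [Fintype V] [DecidableEq V]

/-- `δ₁ β` of a triangle `{i,j,k}`: `β({i,j}) + β({j,k}) + β({i,k})`. -/
def d1 (β : Finset V → ZMod 2) (s : Finset V) : ZMod 2 :=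
  ∑ v ∈ s, β (s.erase v)

lemma two_eq_zero' : (2 : ZMod 2) = 0 := rfl

lemma tri_card {a b c : V} (hab : a ≠ b) (hac : a ≠ c) (hbc : b ≠ c) :
    ({a, b, c} : Finset V).card = 3 := by
  rw [Finset.card_insert_of_notMem (by simp [hab, hac]),
      Finset.card_insert_of_notMem (by simp [hbc]), Finset.card_singleton]

lemma d1_triple (β : Finset V → ZMod 2) {a b c : V} (hab : a ≠ b) (hac : a ≠ c)
    (hbc : b ≠ c) : d1 β {a, b, c} = β {b, c} + β {a, c} + β {a, b} := by
  have ha : a ∉ ({b, c} : Finset V) := by simp [hab, hac]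
  have hb : b ∉ ({c} : Finset V) := by simp [hbc]
  have he1 : ({a, b, c} : Finset V).erase a = {b, c} := by
    ext x
    simp only [Finset.mem_erase, Finset.mem_insert, Finset.mem_singleton]
    constructor
    · rintro ⟨hx, rfl | rfl | rfl⟩ <;> simp_all
    · rintro (rfl | rfl) <;> simp_all [hab.symm, hac.symm]
  have he2 : ({a, b, c} : Finset V).erase b = {a, c} := by
    ext x
    simp only [Finset.mem_erase, Finset.mem_insert, Finset.mem_singleton]
    constructor
    · rintro ⟨hx, rfl | rfl | rfl⟩ <;> simp_all
    · rintro (rfl | rfl) <;> simp_all [hab, hbc.symm]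
  have he3 : ({a, b, c} : Finset V).erase c = {a, b} := by
    ext x
    simp only [Finset.mem_erase, Finset.mem_insert, Finset.mem_singleton]
    constructor
    · rintro ⟨hx, rfl | rfl | rfl⟩ <;> simp_all
    · rintro (rfl | rfl) <;> simp_all [hac, hbc]
  rw [d1, Finset.sum_insert ha, Finset.sum_insert hb, Finset.sum_singleton,
      he1, he2, he3]
  ring

/-- auxiliary coboundary candidate built from a base vertex `v`. -/
def gAux (α α' : Finset V → ZMod 2) (v : V) : V → ZMod 2 :=
  fun u => if u = v then 0 else α {u, v} - α' {u, v}

lemma gAux_sum_mem (α α' : Finset V → ZMod 2) (v : V) {e : Finset V}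
    (he : e.card = 2) (hv : v ∈ e) :
    α e - α' e = ∑ u ∈ e, gAux α α' v u := by
  obtain ⟨x, y, hxy, rfl⟩ := Finset.card_eq_two.mp he
  rw [Finset.sum_pair hxy]
  rcases Finset.mem_insert.mp hv with rfl | hy
  · -- v = x
    have hgx : gAux α α' v v = 0 := by simp [gAux]
    have hgy : gAux α α' v y = α {y, v} - α' {y, v} := by
      simp [gAux, hxy.symm]
    rw [hgx, hgy, Finset.pair_comm y v]
    ring
  · -- v = y
    rw [Finset.mem_singleton] at hy
    subst hy
    have hgx : gAux α α' v x = α {x, v} - α' {x, v} := by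
      simp [gAux, hxy]
    have hgy : gAux α α' v v = 0 := by simp [gAux]
    rw [hgx, hgy]
    ring

lemma badEdges_le (α α' : Finset V → ZMod 2) (v : V) :
    ((Finset.univ : Finset (Finset V)).filter
        (fun e => e.card = 2 ∧ α e - α' e ≠ ∑ u ∈ e, gAux α α' v u)).card
      ≤ (((Finset.univ : Finset (Finset V)).filter
          (fun s => s.card = 3 ∧ d1 α s ≠ d1 α' s)).filter (fun s => v ∈ s)).card := by
  apply Finset.card_le_card_of_injOn (fun e => insert v e)
  · intro e he
    simp only [Finset.coe_filter, Finset.mem_coe, Finset.mem_filter, Finset.mem_univ, true_and, Set.mem_setOf_eq] at he ⊢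
    obtain ⟨hc2, hne⟩ := he
    have hv : v ∉ e := fun hv => hne (gAux_sum_mem α α' v hc2 hv)
    obtain ⟨x, y, hxy, rfl⟩ := Finset.card_eq_two.mp hc2
    have hvx : v ≠ x := by rintro rfl; exact hv (by simp)
    have hvy : v ≠ y := by rintro rfl; exact hv (by simp)
    refine ⟨⟨tri_card hvx hvy hxy, ?_⟩, by simp⟩
    intro heq
    apply hne
    rw [d1_triple α hvx hvy hxy, d1_triple α' hvx hvy hxy] at heq
    rw [Finset.sum_pair hxy]
    have hgx : gAux α α' v x = α {v, x} - α' {v, x} := by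
      simp [gAux, hvx.symm, Finset.pair_comm x v]
    have hgy : gAux α α' v y = α {v, y} - α' {v, y} := by
      simp [gAux, hvy.symm, Finset.pair_comm y v]
    rw [hgx, hgy]
    linear_combination heq - (α {v, x} - α' {v, x} + α {v, y} - α' {v, y}) * two_eq_zero'
  · intro e1 h1 e2 h2 h
    simp only [Finset.coe_filter, Finset.mem_univ, true_and, Set.mem_setOf_eq] at h1 h2
    have hv1 : v ∉ e1 := fun hv => h1.2 (gAux_sum_mem α α' v h1.1 hv)
    have hv2 : v ∉ e2 := fun hv => h2.2 (gAux_sum_mem α α' v h2.1 hv)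
    rw [← Finset.erase_insert hv1, ← Finset.erase_insert hv2]
    simp only at h
    rw [h]

lemma sum_count (T : Finset (Finset V)) (h3 : ∀ s ∈ T, s.card = 3) :
    ∑ v : V, (T.filter (fun s => v ∈ s)).card = 3 * T.card := by
  have h1 : ∀ v : V, (T.filter (fun s => v ∈ s)).card
      = ∑ s ∈ T, if v ∈ s then 1 else 0 := fun v => Finset.card_filter _ _
  simp_rw [h1]
  rw [Finset.sum_comm]
  have h2 : ∀ s ∈ T, (∑ v : V, if v ∈ s then 1 else 0) = 3 := by
    intro s hs
    have : (∑ v : V, if v ∈ s then 1 else 0)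
        = ((Finset.univ : Finset V).filter (fun v => v ∈ s)).card :=
      (Finset.card_filter _ _).symm
    rw [this]
    have : (Finset.univ : Finset V).filter (fun v => v ∈ s) = s := by
      ext x; simp
    rw [this]
    exact h3 s hs
  rw [Finset.sum_congr rfl h2, Finset.sum_const, smul_eq_mul, mul_comm]

/-- **Seidel equivalence testability.** Identify graphs on `[n]` (`n ≥ 3`)
with their edge cochains `α, α' : C¹(K_n, F₂)`.  The fraction (among the `C(n,3)`
triangles) of triangles `{i,j,k}` on which `δ₁ α` and `δ₁ α'` disagree is at least the
normalized distance (over the `C(n,2)` edges) of `α - α'` from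
`B¹(K_n, F₂) = {e ↦ g(u)+g(w)}`; in particular, if `Γ` and `Γ'` are Seidel equivalent
(i.e. `α - α' ∈ B¹`) then `δ₁ α = δ₁ α'`, and conversely. -/
theorem seidel_equivalence_testability (hn : 3 ≤ Fintype.card V)
    (α α' : Finset V → ZMod 2) :
    ((((Finset.univ : Finset (Finset V)).filter
          (fun s => s.card = 3 ∧ d1 α s ≠ d1 α' s)).card : ℝ)
        / ((Fintype.card V).choose 3 : ℝ)
      ≥ ((sInf {k : ℕ | ∃ g : V → ZMod 2,
            k = ((Finset.univ : Finset (Finset V)).filter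
              (fun e => e.card = 2 ∧ α e - α' e ≠ ∑ u ∈ e, g u)).card} : ℕ) : ℝ)
          / ((Fintype.card V).choose 2 : ℝ)) ∧
    ((∃ g : V → ZMod 2, ∀ e : Finset V, e.card = 2 → α e - α' e = ∑ u ∈ e, g u) ↔
      ∀ s : Finset V, s.card = 3 → d1 α s = d1 α' s) := by
  classical
  have hnpos : 0 < Fintype.card V := by omega
  constructor
  · -- the inequality
    set T := (Finset.univ : Finset (Finset V)).filter
        (fun s => s.card = 3 ∧ d1 α s ≠ d1 α' s) with hT
    set S := {k : ℕ | ∃ g : V → ZMod 2,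
        k = ((Finset.univ : Finset (Finset V)).filter
          (fun e => e.card = 2 ∧ α e - α' e ≠ ∑ u ∈ e, g u)).card} with hS
    have hsum : ∑ v : V, (T.filter (fun s => v ∈ s)).card = 3 * T.card := by
      apply sum_count
      intro s hs
      rw [hT, Finset.mem_filter] at hs
      exact hs.2.1
    have hex : ∃ v : V, Fintype.card V * (T.filter (fun s => v ∈ s)).card
        ≤ 3 * T.card := by
      by_contra hcon
      push_neg at hcon
      have hne : (Finset.univ : Finset V).Nonempty :=
        Finset.univ_nonempty_iff.mpr (Fintype.card_pos_iff.mp hnpos)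
      have hlt := Finset.sum_lt_sum_of_nonempty hne
        (f := fun _ => 3 * T.card)
        (g := fun v => Fintype.card V * (T.filter (fun s => v ∈ s)).card)
        (fun v _ => hcon v)
      rw [Finset.sum_const, ← Finset.mul_sum, hsum, smul_eq_mul] at hlt
      exact lt_irrefl _ hlt
    obtain ⟨v, hv⟩ := hex
    have hmem : ((Finset.univ : Finset (Finset V)).filter
        (fun e => e.card = 2 ∧ α e - α' e ≠ ∑ u ∈ e, gAux α α' v u)).card ∈ S :=
      ⟨gAux α α' v, rfl⟩
    have hinf : sInf S ≤ (T.filter (fun s => v ∈ s)).card :=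
      le_trans (Nat.sInf_le hmem) (badEdges_le α α' v)
    have h1 : Fintype.card V * sInf S ≤ 3 * T.card :=
      le_trans (Nat.mul_le_mul_left _ hinf) hv
    have hch : (Fintype.card V).choose 3 * 3
        = (Fintype.card V).choose 2 * (Fintype.card V - 2) :=
      Nat.choose_succ_right_eq _ 2
    have hc2pos : (0 : ℝ) < ((Fintype.card V).choose 2 : ℝ) := by
      exact_mod_cast Nat.choose_pos (by omega)
    have hc3pos : (0 : ℝ) < ((Fintype.card V).choose 3 : ℝ) := by
      exact_mod_cast Nat.choose_pos hn
    rw [ge_iff_le, div_le_div_iff₀ hc2pos hc3pos]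
    have hnat : sInf S * (Fintype.card V).choose 3
        ≤ T.card * (Fintype.card V).choose 2 := by
      have key : 3 * (sInf S * (Fintype.card V).choose 3)
          ≤ 3 * (T.card * (Fintype.card V).choose 2) := by
        calc 3 * (sInf S * (Fintype.card V).choose 3)
            = sInf S * ((Fintype.card V).choose 3 * 3) := by ring
          _ = sInf S * ((Fintype.card V).choose 2 * (Fintype.card V - 2)) := by
              rw [hch]
          _ = ((Fintype.card V - 2) * sInf S) * (Fintype.card V).choose 2 := by
              ring
          _ ≤ (3 * T.card) * (Fintype.card V).choose 2 := by
              apply Nat.mul_le_mul_right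
              calc (Fintype.card V - 2) * sInf S
                  ≤ Fintype.card V * sInf S :=
                    Nat.mul_le_mul_right _ (Nat.sub_le _ _)
                _ ≤ 3 * T.card := h1
          _ = 3 * (T.card * (Fintype.card V).choose 2) := by ring
      omega
    exact_mod_cast hnat
  · constructor
    · rintro ⟨g, hg⟩ s hs3
      obtain ⟨a, b, c, hab, hac, hbc, rfl⟩ := Finset.card_eq_three.mp hs3
      have e1 := hg {b, c} (Finset.card_pair hbc)
      have e2 := hg {a, c} (Finset.card_pair hac)
      have e3 := hg {a, b} (Finset.card_pair hab)
      rw [Finset.sum_pair hbc] at e1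
      rw [Finset.sum_pair hac] at e2
      rw [Finset.sum_pair hab] at e3
      rw [d1_triple α hab hac hbc, d1_triple α' hab hac hbc]
      linear_combination e1 + e2 + e3 + (g a + g b + g c) * two_eq_zero'
    · intro h
      obtain ⟨v⟩ : Nonempty V := Fintype.card_pos_iff.mp hnpos
      refine ⟨gAux α α' v, fun e he => ?_⟩
      by_cases hv : v ∈ e
      · exact gAux_sum_mem α α' v he hv
      · obtain ⟨x, y, hxy, rfl⟩ := Finset.card_eq_two.mp he
        have hvx : v ≠ x := by rintro rfl; exact hv (by simp)
        have hvy : v ≠ y := by rintro rfl; exact hv (by simp)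
        have hs := h {v, x, y} (tri_card hvx hvy hxy)
        rw [d1_triple α hvx hvy hxy, d1_triple α' hvx hvy hxy] at hs
        rw [Finset.sum_pair hxy]
        have hgx : gAux α α' v x = α {v, x} - α' {v, x} := by
          simp [gAux, hvx.symm, Finset.pair_comm x v]
        have hgy : gAux α α' v y = α {v, y} - α' {v, y} := by
          simp [gAux, hvy.symm, Finset.pair_comm y v]
        rw [hgx, hgy]
        linear_combination hs - (α {v, x} - α' {v, x} + α {v, y} - α' {v, y}) * two_eq_zero'
end
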